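/- Let d : ℝ → ℝ be an additive function and let α, β ∈ ℝ satisfy either 0 < 2α < β < π or -π < α < 2β < 0. If d(cot(x)) = -(1/sin²(x))·d(x) holds for all x ∈ (α, β), then d is a standard derivation. -/

import Mathlib

open Real
private theorem additive_q (d : ℝ → ℝ) (hd : ∀ x y : ℝ, d (x+y) = d x + d y)
    (q : ℚ) (x : ℝ) : d (q * x) = q * d x := by
  let f : ℝ →+ ℝ := AddMonoidHom.mk' d hd
  have := map_ratCast_smul f ℝ ℝ q x
  simpa [f, smul_eq_mul] using this

private theorem d_neg (d : ℝ → ℝ) (hd : ∀ x y : ℝ, d (x+y) = d x + d y) (a : ℝ) :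
    d (-a) = -d a := by
  have h0 : d 0 = 0 := by have := hd 0 0; simpa using this.symm
  have := hd a (-a); simp [h0] at this; linarith

private theorem d_sub (d : ℝ → ℝ) (hd : ∀ x y : ℝ, d (x+y) = d x + d y) (a b : ℝ) :
    d (a - b) = d a - d b := by
  have := hd (a - b) b; simp at this; linarith

private theorem inv_all (d : ℝ → ℝ) (hd : ∀ x y : ℝ, d (x+y) = d x + d y)
    (c1 c2 : ℝ) (hc1 : 0 < c1) (hcc : c1 < c2)
    (hJ : ∀ y, c1 < y → y < c2 → d (1/y) = -d y / y^2) :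
    ∀ z, z ≠ 0 → d (1/z) = -d z / z^2 := by
  have hc2 : 0 < c2 := lt_trans hc1 hcc
  have hpos : ∀ z, 0 < z → d (1/z) = -d z / z^2 := by
    intro z hz
    obtain ⟨q, hq1, hq2⟩ := exists_rat_btwn (div_lt_div_of_pos_left hz hc1 hcc)
    have hq0 : 0 < (q:ℝ) := lt_trans (div_pos hz hc2) hq1
    have hy1 : c1 < z / q := by
      rw [lt_div_iff₀ hq0]
      have : (q:ℝ) * c1 < (z/c1) * c1 := by exact mul_lt_mul_of_pos_right hq2 hc1
      rw [div_mul_cancel₀ z (ne_of_gt hc1)] at this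
      linarith
    have hy2 : z / q < c2 := by
      rw [div_lt_iff₀ hq0]
      have : (z/c2) * c2 < (q:ℝ) * c2 := mul_lt_mul_of_pos_right hq1 hc2
      rw [div_mul_cancel₀ z (ne_of_gt hc2)] at this
      linarith
    have hinv := hJ (z/q) hy1 hy2
    have hy0 : z / (q:ℝ) ≠ 0 := ne_of_gt (div_pos hz hq0)
    have hz_eq : z = (q:ℝ) * (z/q) := by field_simp
    have h1z : (1:ℝ)/z = ((q⁻¹ : ℚ):ℝ) * (1/(z/q)) := by push_cast; field_simp
    rw [h1z, additive_q d hd, hinv]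
    rw [show d z = d ((q:ℝ) * (z/q)) by rw [← hz_eq], additive_q d hd]
    push_cast
    field_simp
  intro z hz
  rcases lt_or_gt_of_ne hz with hneg | hposz
  · have h2 := hpos (-z) (by linarith)
    rw [show (1:ℝ)/(-z) = -(1/z) by rw [div_neg], d_neg d hd, d_neg d hd] at h2
    rw [show (-z)^2 = z^2 by ring] at h2
    field_simp at h2 ⊢
    linarith
  · exact hpos z hposz

private theorem sq_law (d : ℝ → ℝ) (hd : ∀ x y : ℝ, d (x+y) = d x + d y)
    (hinv : ∀ z, z ≠ 0 → d (1/z) = -d z / z^2) :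
    ∀ y : ℝ, d (y^2) = 2 * y * d y := by
  have h0 : d 0 = 0 := by have := hd 0 0; simpa using this.symm
  have h1 : d 1 = 0 := by have := hinv 1 one_ne_zero; simp at this; linarith
  intro y
  by_cases hy0 : y = 0
  · subst hy0; simp [h0]
  by_cases hy1 : y = 1
  · subst hy1; simp [h1]
  have hym : y - 1 ≠ 0 := sub_ne_zero.mpr hy1
  have hyy : y^2 - y ≠ 0 := by
    rw [show y^2 - y = y * (y-1) by ring]; exact mul_ne_zero hy0 hym
  have e1 := hinv y hy0
  have e2 := hinv (y-1) hym
  have e3 := hinv (y^2 - y) hyy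
  have key : 1/(y-1) - 1/y = 1/(y^2 - y) := by field_simp; ring
  have e4 : d (1/(y-1)) - d (1/y) = d (1/(y^2-y)) := by rw [← d_sub d hd, key]
  rw [e1, e2, e3, d_sub d hd, d_sub d hd, h1] at e4
  have hyne : y ≠ 0 := hy0
  field_simp at e4
  have hfac : y^2 * (y-1)^2 ≠ 0 := mul_ne_zero (pow_ne_zero 2 hy0) (pow_ne_zero 2 hym)
  have e5 : (d (y^2) - 2*y*d y) * (y^2*(y-1)^2) = 0 := by linear_combination (y^2*(y-1)^2) * e4
  rcases mul_eq_zero.mp e5 with h' | h'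
  · linarith [sub_eq_zero.mp h']
  · exact absurd h' hfac

private theorem cot_inv_law (d : ℝ → ℝ) (hd : ∀ x y : ℝ, d (x+y) = d x + d y)
    (α β : ℝ) (h1 : 0 < 2*α) (h2 : 2*α < β) (h3 : β < Real.pi)
    (h : ∀ x ∈ Set.Ioo α β, d (Real.cos x / Real.sin x) = -(1/(Real.sin x)^2) * d x) :
    ∀ x, α < x → x < β/2 → d (1/(Real.cos x / Real.sin x)) =
      -d (Real.cos x / Real.sin x) / (Real.cos x / Real.sin x)^2 := by
  have hπ := Real.pi_pos
  intro x hx1 hx2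
  have hx0 : 0 < x := by linarith
  have hxh : x < Real.pi/2 := by linarith
  have hs : 0 < Real.sin x := Real.sin_pos_of_pos_of_lt_pi hx0 (by linarith)
  have hco : 0 < Real.cos x := Real.cos_pos_of_mem_Ioo ⟨by linarith, hxh⟩
  have e1 := h x ⟨hx1, by linarith⟩
  have e2 := h (2*x) ⟨by linarith, by linarith⟩
  have d2 : d (2*x) = 2 * d x := by
    rw [show (2:ℝ)*x = x + x by ring, hd]; ring
  have hpy := Real.sin_sq_add_cos_sq x
  set s := Real.sin x with hsdef
  set co := Real.cos x with hcodef
  have hsin2 : Real.sin (2*x) = 2 * s * co := Real.sin_two_mul x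
  have hcos2 : Real.cos (2*x) = 2 * co^2 - 1 := Real.cos_two_mul x
  have harg : Real.cos (2*x) / Real.sin (2*x) = (co/s - s/co)/2 := by
    rw [hsin2, hcos2]; field_simp; linear_combination hpy
  rw [harg, d2] at e2
  have dhalf : ∀ a : ℝ, d (a/2) = d a / 2 := by
    intro a; have := hd (a/2) (a/2); rw [add_halves] at this; linarith
  rw [dhalf, d_sub d hd] at e2
  rw [hsin2] at e2
  rw [show 1/(co/s) = s/co by rw [one_div_div]]
  rw [e1] at e2 ⊢
  field_simp at e2
  -- e2 : (-d x - s ^ 2 * d (s / co)) * (2 * s * co) ^ 2 = -(2 * d x * (s ^ 2 * 2))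
  have hs2 : s^2 ≠ 0 := pow_ne_zero 2 (ne_of_gt hs)
  have hco2 : co^2 ≠ 0 := pow_ne_zero 2 (ne_of_gt hco)
  have e2' : (-d x - s^2 * d (s/co)) * co^2 = -d x := by
    have h4 : (4:ℝ)*s^2 ≠ 0 := by positivity
    apply mul_right_cancel₀ h4
    linear_combination (4*s^2) * e2
  have key2 : s^2 * (d (s/co) * co^2) = s^2 * d x := by
    linear_combination (-(1:ℝ)) * e2' + (-(d x)) * hpy
  have hB : d (s/co) = d x / co^2 := by
    rw [eq_div_iff hco2]
    exact mul_left_cancel₀ hs2 key2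
  rw [hB]
  field_simp

private theorem core (d : ℝ → ℝ) (hd : ∀ x y : ℝ, d (x+y) = d x + d y)
    (α β : ℝ) (h1 : 0 < 2*α) (h2 : 2*α < β) (h3 : β < Real.pi)
    (h : ∀ x ∈ Set.Ioo α β, d (Real.cos x / Real.sin x) = -(1/(Real.sin x)^2) * d x) :
    ∀ x y : ℝ, d (x*y) = d x * y + x * d y := by
  have hπ := Real.pi_pos
  set x1 := α + (β/2 - α)/3 with hx1def
  set x2 := α + 2*((β/2 - α)/3) with hx2def
  have hba : 0 < β/2 - α := by linarith
  have hax1 : α < x1 := by simp only [hx1def]; linarith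
  have hx12 : x1 < x2 := by simp only [hx1def, hx2def]; linarith
  have hx2b : x2 < β/2 := by simp only [hx2def]; linarith
  clear_value x1 x2
  clear hx1def hx2def
  have hmem : ∀ x ∈ Set.Icc x1 x2, α < x ∧ x < β/2 :=
    fun x hx => ⟨lt_of_lt_of_le hax1 hx.1, lt_of_le_of_lt hx.2 hx2b⟩
  have hrange : ∀ x ∈ Set.Icc x1 x2, 0 < x ∧ x < Real.pi/2 := by
    intro x hx
    obtain ⟨ha, hb⟩ := hmem x hx
    exact ⟨by linarith, by linarith⟩
  have hsin : ∀ x ∈ Set.Icc x1 x2, Real.sin x ≠ 0 := by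
    intro x hx
    obtain ⟨ha, hb⟩ := hrange x hx
    exact ne_of_gt (Real.sin_pos_of_pos_of_lt_pi ha (by linarith))
  have hcont : ContinuousOn (fun x => Real.cos x / Real.sin x) (Set.Icc x1 x2) :=
    Real.continuous_cos.continuousOn.div Real.continuous_sin.continuousOn hsin
  have hsub := intermediate_value_Icc' (le_of_lt hx12) hcont
  have h1mem : x1 ∈ Set.Icc x1 x2 := ⟨le_refl _, le_of_lt hx12⟩
  have h2mem : x2 ∈ Set.Icc x1 x2 := ⟨le_of_lt hx12, le_refl _⟩
  obtain ⟨hx1pos, hx1lt⟩ := hrange x1 h1mem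
  obtain ⟨hx2pos, hx2lt⟩ := hrange x2 h2mem
  have hs1 : 0 < Real.sin x1 := Real.sin_pos_of_pos_of_lt_pi hx1pos (by linarith [hx1lt, hπ])
  have hs2 : 0 < Real.sin x2 := Real.sin_pos_of_pos_of_lt_pi hx2pos (by linarith [hx2lt, hπ])
  have hc1 : 0 < Real.cos x1 := Real.cos_pos_of_mem_Ioo ⟨by linarith, hx1lt⟩
  have hc2 : 0 < Real.cos x2 := Real.cos_pos_of_mem_Ioo ⟨by linarith, hx2lt⟩
  have hcc : Real.cos x2 / Real.sin x2 < Real.cos x1 / Real.sin x1 := by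
    rw [div_lt_div_iff₀ hs2 hs1]
    have hcos : Real.cos x2 < Real.cos x1 :=
      Real.cos_lt_cos_of_nonneg_of_le_pi (le_of_lt hx1pos) (by linarith [hx2lt, hπ]) hx12
    have hsin' : Real.sin x1 < Real.sin x2 :=
      Real.sin_lt_sin_of_lt_of_le_pi_div_two (by linarith) (le_of_lt hx2lt) hx12
    nlinarith
  have hcpos : 0 < Real.cos x2 / Real.sin x2 := div_pos hc2 hs2
  have hJ : ∀ y, Real.cos x2 / Real.sin x2 < y → y < Real.cos x1 / Real.sin x1 →
      d (1/y) = -d y / y^2 := by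
    intro y hy1 hy2
    obtain ⟨x, hx, hxy⟩ := hsub ⟨le_of_lt hy1, le_of_lt hy2⟩
    obtain ⟨ha, hb⟩ := hmem x hx
    have hxy' : Real.cos x / Real.sin x = y := hxy
    have := cot_inv_law d hd α β h1 h2 h3 h x ha hb
    rw [hxy'] at this
    exact this
  have hinv := inv_all d hd _ _ hcpos hcc hJ
  have hsq := sq_law d hd hinv
  intro x y
  have e : d ((x+y)^2) = 2*(x+y)*(d x + d y) := by rw [hsq, hd]
  have this2 : d ((x+y)^2) = 2*x*d x + (d (x*y) + (d (x*y) + 2*y*d y)) := by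
    rw [show (x+y)^2 = x^2 + (x*y + (x*y + y^2)) by ring, hd, hd, hd, hsq, hsq]
  linear_combination (e - this2)/2

/-- If an additive function `d` derivates `cot = cos / sin` on `(α, β)` with
`0 < 2α < β < π` or `-π < α < 2β < 0`, then `d` is a standard derivation. -/
theorem stmt_16 (d : ℝ → ℝ) (hd : ∀ x y : ℝ, d (x + y) = d x + d y)
    (α β : ℝ)
    (hαβ : (0 < 2 * α ∧ 2 * α < β ∧ β < Real.pi) ∨
           (-Real.pi < α ∧ α < 2 * β ∧ 2 * β < 0))
    (h : ∀ x ∈ Set.Ioo α β,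
      d (Real.cos x / Real.sin x) = -(1 / (Real.sin x) ^ 2) * d x) :
    ∀ x y : ℝ, d (x * y) = d x * y + x * d y := by
  rcases hαβ with ⟨h1, h2, h3⟩ | ⟨h1, h2, h3⟩
  · exact core d hd α β h1 h2 h3 h
  · set e : ℝ → ℝ := fun x => -d (-x) with hedef
    have hde : ∀ x y : ℝ, e (x + y) = e x + e y := by
      intro x y
      simp only [hedef]
      rw [show -(x+y) = -x + -y by ring, hd]
      ring
    have he : ∀ x ∈ Set.Ioo (-β) (-α),
        e (Real.cos x / Real.sin x) = -(1 / (Real.sin x) ^ 2) * e x := by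
      intro x hx
      have hx' : -x ∈ Set.Ioo α β := ⟨by linarith [hx.2], by linarith [hx.1]⟩
      have hh := h (-x) hx'
      rw [Real.cos_neg, Real.sin_neg] at hh
      rw [show Real.cos x / (-Real.sin x) = -(Real.cos x / Real.sin x) by
        rw [div_neg]] at hh
      rw [d_neg d hd] at hh
      simp only [hedef]
      rw [show (-Real.sin x)^2 = (Real.sin x)^2 by ring] at hh
      rw [show -(Real.cos x / Real.sin x) = -(Real.cos x / Real.sin x) from rfl]
      have : d (-(Real.cos x / Real.sin x)) = -d (Real.cos x / Real.sin x) :=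
        d_neg d hd _
      rw [this]
      linarith [hh]
    have hcase1 : 0 < 2 * (-β) := by linarith
    have hcase2 : 2 * (-β) < -α := by linarith
    have hcase3 : -α < Real.pi := by linarith
    have hder := core e hde (-β) (-α) hcase1 hcase2 hcase3 he
    intro x y
    have hxy := hder (-x) y
    simp only [hedef] at hxy
    rw [show -(-x * y) = x * y by ring, show -(-x) = x by ring] at hxy
    rw [d_neg d hd y] at hxy
    linarith [hxy]
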